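/- Let M be a finite-dimensional second-countable Hausdorff smooth manifold without boundary, and let Y_1,…,Y_k be finitely many smooth vector fields on M. Let 𝓖 denote the C^∞_c(M)-span of Y_1,…,Y_k inside the smooth vector fields on M. Then a smooth vector field X on M satisfies fX ∈ 𝓖 for every f ∈ C^∞_c(M) if and only if X = Σ_{i=1}^k g_i Y_i for some functions g_1,…,g_k ∈ C^∞(M). In other words, the hull {X ∈ 𝔛(M) : fX ∈ 𝓖 for all f ∈ C^∞_c(M)} equals the C^∞(M)-span of Y_1,…,Y_k. -/

import Mathlib

open scoped Manifold Topology
open Set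

noncomputable section

variable (E : Type*) [NormedAddCommGroup E] [NormedSpace ℝ E]
  (M : Type*) [TopologicalSpace M] [ChartedSpace E M]
  [IsManifold 𝓘(ℝ, E) (⊤ : ℕ∞) M]

/-- A smooth vector field on a manifold `M` modeled on the normed space `E`
(all tangent spaces being canonically identified with `E`). -/
def IsSmoothVectorField (V : M → E) : Prop :=
  ContMDiff 𝓘(ℝ, E) 𝓘(ℝ, E).tangent (⊤ : ℕ∞)
    (fun x => (⟨x, V x⟩ : TangentBundle 𝓘(ℝ, E) M))

variable {E M}

/-- Let `Y₁, …, Y_k` be finitely many smooth vector fields on `M` and `𝓖`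
their `C^∞_c(M)`-span. A smooth vector field `X` satisfies `f • X ∈ 𝓖` for every
`f ∈ C^∞_c(M)` if and only if `X = ∑ i, g i • Y i` for some `g i ∈ C^∞(M)`; that is, the
hull of `𝓖` equals the `C^∞(M)`-span of `Y₁, …, Y_k`. -/
theorem hull_of_span_eq_smooth_span
    {E : Type*} [NormedAddCommGroup E] [NormedSpace ℝ E] [FiniteDimensional ℝ E]
    {M : Type*} [TopologicalSpace M] [ChartedSpace E M]
    [IsManifold 𝓘(ℝ, E) (⊤ : ℕ∞) M] [T2Space M] [SecondCountableTopology M]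
    (k : ℕ) (Y : Fin k → M → E) (hY : ∀ i, IsSmoothVectorField E M (Y i))
    (X : M → E) (hX : IsSmoothVectorField E M X) :
    (∀ f : M → ℝ, ContMDiff 𝓘(ℝ, E) 𝓘(ℝ, ℝ) (⊤ : ℕ∞) f → HasCompactSupport f →
      ∃ g : Fin k → M → ℝ,
        (∀ i, ContMDiff 𝓘(ℝ, E) 𝓘(ℝ, ℝ) (⊤ : ℕ∞) (g i) ∧ HasCompactSupport (g i)) ∧
        (fun x => f x • X x) = fun x => ∑ i, g i x • Y i x) ↔
    ∃ g : Fin k → M → ℝ, (∀ i, ContMDiff 𝓘(ℝ, E) 𝓘(ℝ, ℝ) (⊤ : ℕ∞) (g i)) ∧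
      X = fun x => ∑ i, g i x • Y i x := by
  constructor
  · intro h
    haveI : LocallyCompactSpace E := inferInstance
    haveI : LocallyCompactSpace M := ChartedSpace.locallyCompactSpace E M
    -- choose a cover of `M` by relatively compact open sets
    choose U hUo hxU hUc using fun x : M => exists_isOpen_mem_isCompact_closure (X := M) x
    obtain ⟨ρ, hρ⟩ := SmoothPartitionOfUnity.exists_isSubordinate (I := 𝓘(ℝ, E))
      isClosed_univ U hUo (fun x _ => mem_iUnion.2 ⟨x, hxU x⟩)
    have hρc : ∀ j : M, IsCompact (tsupport (ρ j)) := fun j =>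
      (hUc j).of_isClosed_subset (isClosed_tsupport _) ((hρ j).trans subset_closure)
    -- apply the hypothesis to each `ρ j`
    choose g' hg' hEq using fun j : M => h (ρ j) (ρ j).contMDiff (hρc j)
    -- the finite sets `S j` of indices whose supports meet `tsupport (ρ j)`
    have hSfin : ∀ j : M, {m : M | (Function.support (ρ m) ∩ tsupport (ρ j)).Nonempty}.Finite :=
      fun j => ρ.locallyFinite.finite_nonempty_inter_compact (hρc j)
    set χ : M → M → ℝ := fun j x => ∑ m ∈ (hSfin j).toFinset, ρ m x with hχdef
    have hρ_open : ∀ m : M, IsOpen (Function.support (ρ m)) := fun m =>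
      (isOpen_ne : IsOpen {y : ℝ | y ≠ 0}).preimage (ρ m).contMDiff.continuous
    have hχ_smooth : ∀ j, ContMDiff 𝓘(ℝ, E) 𝓘(ℝ, ℝ) (⊤ : ℕ∞) (χ j) := fun j =>
      contMDiff_finset_sum fun m _ => (ρ m).contMDiff
    have hχ_one : ∀ j, ∀ x ∈ tsupport (ρ j), χ j x = 1 := by
      intro j x hx
      have hsub : Function.support (fun m : M => ρ m x) ⊆ ↑(hSfin j).toFinset := by
        intro m hm
        exact (hSfin j).mem_toFinset.2 ⟨x, hm, hx⟩
      have hfe : χ j x = ∑ᶠ m : M, ρ m x :=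
        (finsum_eq_finset_sum_of_support_subset _ hsub).symm
      rw [hfe]
      exact ρ.sum_eq_one (mem_univ x)
    have hχρ : ∀ j x, χ j x * ρ j x = ρ j x := by
      intro j x
      by_cases hx : ρ j x = 0
      · rw [hx, mul_zero]
      · rw [hχ_one j x (subset_closure hx), one_mul]
    have hχ_supp : ∀ j x, χ j x ≠ 0 → ∃ m ∈ (hSfin j).toFinset, ρ m x ≠ 0 := by
      intro j x hx
      by_contra hc
      push_neg at hc
      exact hx (Finset.sum_eq_zero fun m hm => hc m hm)
    -- local finiteness of the supports of the `χ j`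
    have hA : ∀ m : M, {j : M | (Function.support (ρ j) ∩ tsupport (ρ m)).Nonempty}.Finite :=
      fun m => ρ.locallyFinite.finite_nonempty_inter_compact (hρc m)
    have hχ_lf : LocallyFinite fun j : M => Function.support (χ j) := by
      intro x
      obtain ⟨N, hN, hNfin⟩ := ρ.locallyFinite x
      refine ⟨N, hN, Set.Finite.subset (hNfin.biUnion fun m _ => hA m) ?_⟩
      rintro j ⟨y, hyχ, hyN⟩
      obtain ⟨m, hm, hρmy⟩ := hχ_supp j y hyχ
      refine mem_biUnion (⟨y, hρmy, hyN⟩ : (Function.support (ρ m) ∩ N).Nonempty) ?_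
      obtain ⟨z, hz1, hz2⟩ := (hSfin j).mem_toFinset.mp hm
      obtain ⟨w, hw1, hw2⟩ := mem_closure_iff.1 hz2 _ (hρ_open m) hz1
      exact ⟨w, hw2, subset_closure hw1⟩
    -- the global coefficients
    refine ⟨fun i x => ∑ᶠ j : M, χ j x * g' j i x, fun i => ?_, ?_⟩
    · exact contMDiff_finsum (fun j => (hχ_smooth j).mul (hg' j i).1)
        (hχ_lf.subset fun j => Function.support_mul_subset_left _ _)
    · funext x
      have hTfin : {j : M | χ j x ≠ 0}.Finite := hχ_lf.point_finite x
      set T := hTfin.toFinset with hT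
      have hg_eq : ∀ i : Fin k,
          (∑ᶠ j : M, χ j x * g' j i x) = ∑ j ∈ T, χ j x * g' j i x := by
        intro i
        refine finsum_eq_finset_sum_of_support_subset _ ?_
        intro j hj
        exact hTfin.mem_toFinset.2 fun hc => hj (by simp [hc])
      have hρT : Function.support (fun j : M => ρ j x) ⊆ ↑T := by
        intro j hj
        refine hTfin.mem_toFinset.2 ?_
        show χ j x ≠ 0
        rw [hχ_one j x (subset_closure hj)]
        norm_num
      calc X x = (∑ᶠ j : M, ρ j x) • X x := by
              rw [ρ.sum_eq_one (mem_univ x), one_smul]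
        _ = (∑ j ∈ T, ρ j x) • X x := by
              rw [finsum_eq_finset_sum_of_support_subset _ hρT]
        _ = ∑ j ∈ T, (χ j x * ρ j x) • X x := by
              rw [Finset.sum_smul]; simp_rw [hχρ]
        _ = ∑ j ∈ T, χ j x • (ρ j x • X x) := by
              simp_rw [smul_smul]
        _ = ∑ j ∈ T, χ j x • (∑ i, g' j i x • Y i x) := by
              refine Finset.sum_congr rfl fun j _ => ?_
              rw [congrFun (hEq j) x]
        _ = ∑ j ∈ T, ∑ i, (χ j x * g' j i x) • Y i x := by
              refine Finset.sum_congr rfl fun j _ => ?_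
              rw [Finset.smul_sum]; simp_rw [smul_smul]
        _ = ∑ i, (∑ j ∈ T, χ j x * g' j i x) • Y i x := by
              rw [Finset.sum_comm]
              refine Finset.sum_congr rfl fun i _ => ?_
              rw [Finset.sum_smul]
        _ = ∑ i, (∑ᶠ j : M, χ j x * g' j i x) • Y i x := by
              simp_rw [hg_eq]
  · rintro ⟨g, hg, hXeq⟩ f hf hfc
    refine ⟨fun i x => f x * g i x,
      fun i => ⟨hf.mul (hg i), hfc.mul_right⟩, ?_⟩
    funext x
    rw [congrFun hXeq x, Finset.smul_sum]
    simp_rw [smul_smul]
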